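/- There exists a nondecreasing function ũ : ℝ → [0, 1] such that the vector W* defined by W*_i = a_i + (b_i − a_i) · ũ(r_i) satisfies a_i ≤ W*_i ≤ b_i for all i and (Σ_{i=1}^n r_i W*_i) / (Σ_{i=1}^n W*_i) = Q(r; a, b); that is, the box-constrained linear-fractional supremum is attained by weights that are a nondecreasing function of the coefficient r_i, equal to the lower bound a_i below a threshold value of r_i and to the upper bound b_i above it. -/

import Mathlib

open Finset

/-- The box-constrained linear-fractional supremum `Q(r; a, b)` is attained
by weights of the form `W*_i = a_i + (b_i - a_i) · ũ(r_i)` for a nondecreasing function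
`ũ : ℝ → [0, 1]`: such weights are feasible and their ratio equals `Q(r; a, b)`. -/
theorem stmt_3 (n : ℕ) (hn : 1 ≤ n) (r a b : Fin n → ℝ)
    (ha : ∀ i, 0 < a i) (hab : ∀ i, a i ≤ b i) :
    ∃ u : ℝ → ℝ, Monotone u ∧ (∀ y, u y ∈ Set.Icc (0 : ℝ) 1) ∧
      (∀ i, a i ≤ a i + (b i - a i) * u (r i) ∧ a i + (b i - a i) * u (r i) ≤ b i) ∧
      (∑ i, r i * (a i + (b i - a i) * u (r i))) /
          (∑ i, (a i + (b i - a i) * u (r i))) =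
        sSup { q : ℝ | ∃ W : Fin n → ℝ, (∀ i, a i ≤ W i ∧ W i ≤ b i) ∧
          q = (∑ i, r i * W i) / (∑ i, W i) } := by
  have hFin : Nonempty (Fin n) := ⟨⟨0, hn⟩⟩
  set S : Set ℝ := { q : ℝ | ∃ W : Fin n → ℝ, (∀ i, a i ≤ W i ∧ W i ≤ b i) ∧
      q = (∑ i, r i * W i) / (∑ i, W i) } with hS
  have hb : ∀ i, 0 < b i := fun i => lt_of_lt_of_le (ha i) (hab i)
  have hD0 : 0 < ∑ i, a i := Finset.sum_pos (fun i _ => ha i) Finset.univ_nonempty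
  have hBpos : 0 < ∑ i, b i := Finset.sum_pos (fun i _ => hb i) Finset.univ_nonempty
  have hSne : S.Nonempty := ⟨_, a, fun i => ⟨le_refl _, hab i⟩, rfl⟩
  have hDpos : ∀ W : Fin n → ℝ, (∀ i, a i ≤ W i ∧ W i ≤ b i) → 0 < ∑ i, W i :=
    fun W hW => Finset.sum_pos (fun i _ => lt_of_lt_of_le (ha i) (hW i).1)
      Finset.univ_nonempty
  have hDleB : ∀ W : Fin n → ℝ, (∀ i, a i ≤ W i ∧ W i ≤ b i) →
      (∑ i, W i) ≤ ∑ i, b i :=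
    fun W hW => Finset.sum_le_sum fun i _ => (hW i).2
  set C := (∑ i, |r i| * b i) / (∑ i, a i) with hC
  have hCnonneg : 0 ≤ C :=
    div_nonneg (Finset.sum_nonneg fun i _ => mul_nonneg (abs_nonneg _) (hb i).le) hD0.le
  have hbdd : ∀ q ∈ S, q ≤ C := by
    rintro q ⟨W, hW, rfl⟩
    have hD := hDpos W hW
    rw [div_le_iff₀ hD]
    have h1 : ∑ i, r i * W i ≤ ∑ i, |r i| * b i := by
      apply Finset.sum_le_sum
      intro i _
      calc r i * W i ≤ |r i * W i| := le_abs_self _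
        _ = |r i| * |W i| := abs_mul _ _
        _ ≤ |r i| * b i := by
            apply mul_le_mul_of_nonneg_left _ (abs_nonneg _)
            rw [abs_of_nonneg (le_of_lt (lt_of_lt_of_le (ha i) (hW i).1))]
            exact (hW i).2
    have h2 : (∑ i, |r i| * b i) = C * (∑ i, a i) := by
      rw [hC, div_mul_cancel₀]; exact hD0.ne'
    have h3 : C * (∑ i, a i) ≤ C * (∑ i, W i) :=
      mul_le_mul_of_nonneg_left (Finset.sum_le_sum fun i _ => (hW i).1) hCnonneg
    linarith
  have hBdd : BddAbove S := ⟨C, hbdd⟩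
  set Q := sSup S with hQ
  set u : ℝ → ℝ := fun y => if Q ≤ y then 1 else 0 with hu
  have hu01 : ∀ y, u y ∈ Set.Icc (0 : ℝ) 1 := by
    intro y; simp only [hu]; split_ifs <;> norm_num
  have humono : Monotone u := by
    intro x y hxy
    simp only [hu]
    split_ifs with h1 h2 h2
    · exact le_refl _
    · exact absurd (le_trans h1 hxy) h2
    · norm_num
    · exact le_refl _
  set W : Fin n → ℝ := fun i => a i + (b i - a i) * u (r i) with hW
  have hWfeas : ∀ i, a i ≤ W i ∧ W i ≤ b i := by
    intro i
    have h01 := hu01 (r i)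
    have hba : 0 ≤ b i - a i := by linarith [hab i]
    constructor
    · have : 0 ≤ (b i - a i) * u (r i) := mul_nonneg hba h01.1
      simp only [hW]; linarith
    · have : (b i - a i) * u (r i) ≤ (b i - a i) * 1 :=
        mul_le_mul_of_nonneg_left h01.2 hba
      simp only [hW]; linarith
  refine ⟨u, humono, hu01, hWfeas, ?_⟩
  have hDW := hDpos W hWfeas
  -- pointwise optimality of W for the linear functional with coefficient r i - Q
  have hpt : ∀ (V : Fin n → ℝ), (∀ i, a i ≤ V i ∧ V i ≤ b i) → ∀ i,
      (r i - Q) * V i ≤ (r i - Q) * W i := by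
    intro V hV i
    by_cases h : Q ≤ r i
    · have hWi : W i = b i := by simp only [hW, hu]; rw [if_pos h]; ring
      rw [hWi]
      exact mul_le_mul_of_nonneg_left (hV i).2 (by linarith)
    · have hWi : W i = a i := by simp [hW, hu, if_neg h]
      rw [hWi]
      push_neg at h
      have : r i - Q ≤ 0 := by linarith
      nlinarith [(hV i).1]
  -- T ≥ 0 where T = ∑ (r i - Q) * W i
  have hT : (0:ℝ) ≤ ∑ i, (r i - Q) * W i := by
    set T := ∑ i, (r i - Q) * W i with hTdef
    have key : ∀ ε : ℝ, 0 < ε → -ε * (∑ i, b i) ≤ T := by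
      intro ε hε
      obtain ⟨q, hqS, hq⟩ := exists_lt_of_lt_csSup hSne
        (show Q - ε < sSup S by rw [← hQ]; linarith)
      obtain ⟨V, hV, rfl⟩ := hqS
      have hDV := hDpos V hV
      have hsum : ∑ i, (r i - Q) * V i =
          (∑ i, r i * V i) - Q * (∑ i, V i) := by
        rw [Finset.mul_sum, ← Finset.sum_sub_distrib]
        exact Finset.sum_congr rfl fun i _ => by ring
      have hNe : ((∑ i, r i * V i) / (∑ i, V i)) * (∑ i, V i) = ∑ i, r i * V i :=
        div_mul_cancel₀ _ hDV.ne'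
      have h1 : -ε * (∑ i, V i) ≤ ∑ i, (r i - Q) * V i := by
        rw [hsum]
        nlinarith
      have h2 : ∑ i, (r i - Q) * V i ≤ T :=
        Finset.sum_le_sum fun i _ => hpt V hV i
      have h3 : -ε * (∑ i, b i) ≤ -ε * (∑ i, V i) := by
        nlinarith [hDleB V hV]
      linarith
    by_contra hneg
    push_neg at hneg
    have hε : 0 < -T / (2 * (∑ i, b i)) := div_pos (by linarith) (by linarith)
    have := key _ hε
    have heq : -(-T / (2 * (∑ i, b i))) * (∑ i, b i) = T / 2 := by
      field_simp
    rw [heq] at this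
    linarith
  have hsumW : ∑ i, (r i - Q) * W i =
      (∑ i, r i * W i) - Q * (∑ i, W i) := by
    rw [Finset.mul_sum, ← Finset.sum_sub_distrib]
    exact Finset.sum_congr rfl fun i _ => by ring
  apply le_antisymm
  · exact le_csSup hBdd ⟨W, hWfeas, rfl⟩
  · rw [hQ] at hT hsumW ⊢
    rw [le_div_iff₀ hDW]
    rw [hsumW] at hT
    linarith
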